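/- Let m ≤ n, W = VΣU as in the dimension-decreasing SVD parametrization. For x ∈ ℝ^n write y = Ux and split y = (y_{1:m}, y_{m+1:n}). Then the map x ↦ (Wx + b, y_{m+1:n}) = ((VΣ_m y_{1:m}) + b, y_{m+1:n}) is a bijection ℝ^n → ℝ^m × ℝ^{n−m} with log absolute Jacobian determinant equal to ∑_{i=1}^m log σ_i, where Σ_m = diag(σ_1,...,σ_m). -/

import Mathlib

open Matrix

/-- Multi-scale decomposition of a dimension-decreasing linear layer: with `y = Ux`,
the map `x ↦ (Wx + b, y_{m+1:n})` is a bijection `ℝ^n → ℝ^m × ℝ^{n−m}` whose log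
absolute Jacobian determinant equals `∑ᵢ log σᵢ`. -/
theorem multiscale_decomposition_bijective
    {m n : ℕ} (hmn : m ≤ n)
    (U : Matrix (Fin n) (Fin n) ℝ) (V : Matrix (Fin m) (Fin m) ℝ)
    (hU : Uᵀ * U = 1) (hU' : U * Uᵀ = 1) (hUdet : U.det = 1)
    (hV : Vᵀ * V = 1) (hV' : V * Vᵀ = 1) (hVdet : V.det = 1)
    (σ : Fin m → ℝ) (hσ : ∀ i, 0 < σ i)
    (S : Matrix (Fin m) (Fin n) ℝ)
    (hS : ∀ i j, S i j = if (i : ℕ) = (j : ℕ) then σ i else 0)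
    (b : Fin m → ℝ) :
    Function.Bijective (fun x : Fin n → ℝ =>
      (((V * S * U).mulVec x + b : Fin m → ℝ),
        (fun j : Fin (n - m) =>
          U.mulVec x ⟨m + (j : ℕ), by have := j.isLt; omega⟩))) ∧
    Real.log |(Matrix.of (fun i j : Fin n =>
        if h : (i : ℕ) < m then (V * S * U) ⟨(i : ℕ), h⟩ j else U i j)).det| =
      ∑ i, Real.log (σ i) := by
  set M : Matrix (Fin n) (Fin n) ℝ := Matrix.of (fun i j : Fin n =>
      if h : (i : ℕ) < m then (V * S * U) ⟨(i : ℕ), h⟩ j else U i j) with hMdef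
  set B : Matrix (Fin n) (Fin n) ℝ := Matrix.of (fun i j : Fin n =>
      if h : (i : ℕ) < m then (V * S) ⟨(i : ℕ), h⟩ j
      else (1 : Matrix (Fin n) (Fin n) ℝ) i j) with hBdef
  have hBU : M = B * U := by
    ext i j
    simp only [hMdef, hBdef, Matrix.mul_apply, Matrix.of_apply]
    by_cases h : (i : ℕ) < m
    · simp only [dif_pos h]
    · simp only [dif_neg h, Matrix.one_apply, ite_mul, one_mul, zero_mul,
        Finset.sum_ite_eq, Finset.sum_ite_eq', Finset.mem_univ, if_true]
  -- the reindexing equivalence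
  have hadd : m + (n - m) = n := by omega
  let e : Fin m ⊕ Fin (n - m) ≃ Fin n := finSumFinEquiv.trans (finCongr hadd)
  have he_inl : ∀ i : Fin m, ((e (Sum.inl i) : Fin n) : ℕ) = (i : ℕ) := by
    intro i; simp [e]
  have he_inr : ∀ j : Fin (n - m), ((e (Sum.inr j) : Fin n) : ℕ) = m + (j : ℕ) := by
    intro j; simp [e]
  have hBsub : B.submatrix e e =
      Matrix.fromBlocks (V * Matrix.diagonal σ)
        (Matrix.of fun i j => B (e (Sum.inl i)) (e (Sum.inr j))) 0 1 := by
    ext i j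
    rcases i with i | i <;> rcases j with j | j
    · have hi : ((e (Sum.inl i) : Fin n) : ℕ) < m := by rw [he_inl]; exact i.isLt
      simp only [Matrix.submatrix_apply, hBdef, Matrix.of_apply, dif_pos hi,
        Matrix.fromBlocks_apply₁₁]
      have hie : (⟨((e (Sum.inl i) : Fin n) : ℕ), hi⟩ : Fin m) = i := by
        ext; exact he_inl i
      rw [hie, Matrix.mul_apply, Matrix.mul_apply]
      apply Finset.sum_congr rfl
      intro k _
      rw [hS, Matrix.diagonal_apply]
      have : ((k : ℕ) = ((e (Sum.inl j) : Fin n) : ℕ)) ↔ k = j := by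
        rw [he_inl]; exact Fin.val_eq_val k j
      by_cases hkj : k = j
      · rw [if_pos (this.mpr hkj), if_pos hkj]
      · rw [if_neg (fun hc => hkj (this.mp hc)), if_neg hkj, mul_zero]
    · simp [Matrix.submatrix_apply]
    · have hi : ¬ ((e (Sum.inr i) : Fin n) : ℕ) < m := by rw [he_inr]; omega
      simp only [Matrix.submatrix_apply, hBdef, Matrix.of_apply, dif_neg hi,
        Matrix.fromBlocks_apply₂₁, Matrix.one_apply, Matrix.zero_apply]
      rw [if_neg]
      intro hc
      have := congrArg (Fin.val) hc
      rw [he_inr, he_inl] at this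
      omega
    · have hi : ¬ ((e (Sum.inr i) : Fin n) : ℕ) < m := by rw [he_inr]; omega
      simp only [Matrix.submatrix_apply, hBdef, Matrix.of_apply, dif_neg hi,
        Matrix.fromBlocks_apply₂₂, Matrix.one_apply]
      have : (e (Sum.inr i) = e (Sum.inr j)) ↔ i = j := by
        constructor
        · intro h; exact Sum.inr_injective (e.injective h)
        · intro h; rw [h]
      by_cases hij : i = j
      · rw [if_pos (this.mpr hij), if_pos hij]
      · rw [if_neg (fun hc => hij (this.mp hc)), if_neg hij]
  have hBdet : B.det = ∏ i, σ i := by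
    rw [← Matrix.det_submatrix_equiv_self e B, hBsub,
      Matrix.det_fromBlocks_zero₂₁, Matrix.det_one, mul_one,
      Matrix.det_mul, hVdet, one_mul, Matrix.det_diagonal]
  have hMdet : M.det = ∏ i, σ i := by
    rw [hBU, Matrix.det_mul, hUdet, mul_one, hBdet]
  have hprodpos : (0:ℝ) < ∏ i, σ i := Finset.prod_pos fun i _ => hσ i
  constructor
  · -- bijectivity
    have hMunit : IsUnit M.det := by rw [hMdet]; exact (ne_of_gt hprodpos).isUnit
    have : Invertible M := M.invertibleOfIsUnitDet hMunit
    -- g and its inverse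
    set g : (Fin n → ℝ) → (Fin m → ℝ) × (Fin (n - m) → ℝ) := fun y =>
      ((fun i : Fin m => y ⟨(i : ℕ), lt_of_lt_of_le i.isLt hmn⟩ + b i),
       (fun j : Fin (n - m) => y ⟨m + (j : ℕ), by have := j.isLt; omega⟩)) with hg
    set ginv : (Fin m → ℝ) × (Fin (n - m) → ℝ) → (Fin n → ℝ) := fun p k =>
      if h : (k : ℕ) < m then p.1 ⟨(k : ℕ), h⟩ - b ⟨(k : ℕ), h⟩
      else p.2 ⟨(k : ℕ) - m, by have := k.isLt; omega⟩ with hginv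
    have hgbij : Function.Bijective g := by
      rw [Function.bijective_iff_has_inverse]
      refine ⟨ginv, ?_, ?_⟩
      · intro y
        funext k
        simp only [hg, hginv]
        by_cases h : (k : ℕ) < m
        · rw [dif_pos h]; simp
        · rw [dif_neg h]
          congr 1
          ext
          simp only []
          omega
      · intro p
        simp only [hg, hginv]
        refine Prod.ext ?_ ?_
        · funext i
          dsimp only
          rw [dif_pos i.isLt]
          simp
        · funext j
          dsimp only
          rw [dif_neg (show ¬ (m + (j : ℕ) < m) by omega)]
          simp
    have hMbij : Function.Bijective (M.mulVec) := by
      rw [Function.bijective_iff_has_inverse]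
      refine ⟨(M⁻¹).mulVec, ?_, ?_⟩
      · intro x
        rw [Matrix.mulVec_mulVec, Matrix.inv_mul_of_invertible, Matrix.one_mulVec]
      · intro x
        rw [Matrix.mulVec_mulVec, Matrix.mul_inv_of_invertible, Matrix.one_mulVec]
    have hcomp : (fun x : Fin n → ℝ =>
        (((V * S * U).mulVec x + b : Fin m → ℝ),
          (fun j : Fin (n - m) =>
            U.mulVec x ⟨m + (j : ℕ), by have := j.isLt; omega⟩))) = g ∘ M.mulVec := by
      funext x
      simp only [Function.comp_apply, hg]
      refine Prod.ext ?_ ?_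
      · funext i
        simp only [Pi.add_apply, Matrix.mulVec, dotProduct, hMdef, Matrix.of_apply]
        congr 1
        apply Finset.sum_congr rfl
        intro k _
        rw [dif_pos i.isLt]
      · funext j
        simp only [Matrix.mulVec, dotProduct, hMdef, Matrix.of_apply]
        apply Finset.sum_congr rfl
        intro k _
        rw [dif_neg (show ¬ (m + (j : ℕ) < m) from by omega)]
    rw [hcomp]
    exact hgbij.comp hMbij
  · rw [hMdet, abs_of_pos hprodpos,
      Real.log_prod (fun i _ => (ne_of_gt (hσ i)))]
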